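/- Let X be a topological space and let C₀ ⊆ 𝓛X be a d-dense subcone: C₀ is closed under pointwise addition and ℝ≥0-scalar multiplication, and the only subset S of 𝓛X with C₀ ⊆ S that is closed under addition, ℝ≥0-scalar multiplication, and pointwise suprema of nonempty pointwise-directed subsets is S = 𝓛X. Endow 𝓥X with the topology generated by the sets {μ ∈ 𝓥X | (r:ℝ≥0∞) < μ(f)} for f ∈ C₀ and r : ℝ≥0. Then every sublinear functional φ : 𝓥X → ℝ≥0∞ that is lower semicontinuous for this topology satisfies, for every μ ∈ 𝓥X, φ(μ) = ⨆ (f : C₀) (_ : ∀ ν ∈ 𝓥X, ν(f) ≤ φ(ν)), μ(f). -/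

import Mathlib

open scoped ENNReal NNReal Topology

/-- `𝓛X`: the cone of lower semicontinuous functions `X → ℝ≥0∞`,
ordered pointwise. -/
abbrev LSCFun (X : Type*) [TopologicalSpace X] := {f : X → ℝ≥0∞ // LowerSemicontinuous f}

namespace LSCFun

variable {X : Type*} [TopologicalSpace X]

/-- Pointwise addition on `𝓛X`. -/
noncomputable instance : Add (LSCFun X) := ⟨fun f g => ⟨f.1 + g.1, f.2.add g.2⟩⟩

/-- Pointwise scalar multiplication by nonnegative reals on `𝓛X`. -/
noncomputable instance : SMul ℝ≥0 (LSCFun X) :=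
  ⟨fun r f => ⟨fun x => (r : ℝ≥0∞) * f.1 x,
    (ENNReal.continuous_const_mul (by simp)).comp_lowerSemicontinuous f.2
      fun _ _ hab => mul_le_mul_of_nonneg_left hab zero_le⟩⟩

/-- The pointwise supremum of a set of lower semicontinuous functions,
again lower semicontinuous. -/
noncomputable def supOf (S : Set (LSCFun X)) : LSCFun X :=
  ⟨fun x => ⨆ f ∈ S, f.1 x, by
    simp only [iSup_subtype']
    exact lowerSemicontinuous_iSup fun f => f.1.2⟩

/-- Scott continuity of a functional `μ : 𝓛X → ℝ≥0∞`: `μ` preserves pointwise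
suprema of nonempty (pointwise-)directed families in `𝓛X`. -/
def ScottCont (μ : LSCFun X → ℝ≥0∞) : Prop :=
  ∀ S : Set (LSCFun X), S.Nonempty → DirectedOn (· ≤ ·) S →
    μ (supOf S) = ⨆ f ∈ S, μ f

end LSCFun

/-- `𝓥X`: the valuation powerdomain, consisting of the linear Scott-continuous
functionals `μ : 𝓛X → ℝ≥0∞`. -/
def ValuationPD (X : Type*) [TopologicalSpace X] : Set ((LSCFun X) → ℝ≥0∞) :=
  {μ | (∀ f g : LSCFun X, μ (f + g) = μ f + μ g) ∧
       (∀ (r : ℝ≥0) (f : LSCFun X), μ (r • f) = (r : ℝ≥0∞) * μ f) ∧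
       LSCFun.ScottCont μ}

/-- The weak*upper topology on `𝓥X`, generated by the subbasic open sets
`{μ | r < μ(f)}` for `f ∈ 𝓛X` and `r : ℝ≥0`. -/
def weakStarUpper (X : Type*) [TopologicalSpace X] : TopologicalSpace (ValuationPD X) :=
  TopologicalSpace.generateFrom
    {S | ∃ (f : LSCFun X) (r : ℝ≥0), S = {μ : ValuationPD X | (r : ℝ≥0∞) < μ.1 f}}

namespace SSProof

variable {X : Type*} [TopologicalSpace X]

lemma val_mono {μ : (LSCFun X) → ℝ≥0∞} (hμ : μ ∈ ValuationPD X) {f g : LSCFun X}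
    (h : f.1 ≤ g.1) : μ f ≤ μ g := by
  have hFg : ∀ c ∈ ({f, g} : Set (LSCFun X)), c ≤ g := by
    rintro c (rfl | rfl)
    · exact h
    · exact le_rfl
  have hdir : DirectedOn (· ≤ ·) ({f, g} : Set (LSCFun X)) :=
    fun a ha b hb => ⟨g, Set.mem_insert_of_mem _ rfl, hFg a ha, hFg b hb⟩
  have hsup : LSCFun.supOf ({f, g} : Set (LSCFun X)) = g := by
    apply Subtype.ext; funext x
    show ⨆ h ∈ ({f, g} : Set (LSCFun X)), h.1 x = g.1 x
    rw [iSup_insert, iSup_singleton]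
    exact sup_eq_right.2 (h x)
  have hs := hμ.2.2 {f, g} ⟨f, Set.mem_insert _ _⟩ hdir
  rw [hsup, iSup_insert, iSup_singleton] at hs
  rw [hs]
  exact le_sup_left

lemma zero_mem_V : (fun _ : LSCFun X => (0 : ℝ≥0∞)) ∈ ValuationPD X := by
  refine ⟨fun _ _ => by simp, fun _ _ => by simp, fun S hS hdir => ?_⟩
  rw [iSup_subtype']
  haveI : Nonempty S := hS.to_subtype
  simp

lemma add_mem_V {μ ν : (LSCFun X) → ℝ≥0∞} (hμ : μ ∈ ValuationPD X) (hν : ν ∈ ValuationPD X) :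
    (fun g => μ g + ν g) ∈ ValuationPD X := by
  refine ⟨fun f g => by dsimp only; rw [hμ.1, hν.1]; ring,
    fun r f => by dsimp only; rw [hμ.2.1, hν.2.1]; ring,
    fun S hS hdir => ?_⟩
  dsimp only
  rw [hμ.2.2 S hS hdir, hν.2.2 S hS hdir]
  simp only [iSup_subtype']
  exact ENNReal.iSup_add_iSup fun i j => by
    obtain ⟨k, hk, hik, hjk⟩ := hdir i.1 i.2 j.1 j.2
    exact ⟨⟨k, hk⟩, add_le_add (val_mono hμ hik) (val_mono hν hjk)⟩

lemma smul_mem_V (c : ℝ≥0) {μ : (LSCFun X) → ℝ≥0∞} (hμ : μ ∈ ValuationPD X) :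
    (fun g => (c : ℝ≥0∞) * μ g) ∈ ValuationPD X := by
  refine ⟨fun f g => by dsimp only; rw [hμ.1]; ring,
    fun r f => by dsimp only; rw [hμ.2.1]; ring,
    fun S hS hdir => ?_⟩
  dsimp only
  rw [hμ.2.2 S hS hdir]
  simp only [iSup_subtype']
  exact ENNReal.mul_iSup _ _

lemma combo_mem_V {ι : Type*} (t : Finset ι) (w : ι → ℝ≥0) (νs : ι → (LSCFun X) → ℝ≥0∞)
    (hν : ∀ j ∈ t, νs j ∈ ValuationPD X) :
    (fun g => ∑ j ∈ t, (w j : ℝ≥0∞) * νs j g) ∈ ValuationPD X := by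
  classical
  induction t using Finset.cons_induction with
  | empty => simpa using zero_mem_V
  | cons a s ha ih =>
    have h1 : (fun g => (w a : ℝ≥0∞) * νs a g) ∈ ValuationPD X :=
      smul_mem_V _ (hν a (Finset.mem_cons_self a s))
    have h2 : (fun g => ∑ j ∈ s, (w j : ℝ≥0∞) * νs j g) ∈ ValuationPD X :=
      ih fun j hj => hν j (Finset.mem_cons_of_mem hj)
    refine Set.mem_of_eq_of_mem ?_ (add_mem_V h1 h2)
    funext g
    rw [Finset.sum_cons]

end SSProof

section part2

namespace SSProof

variable {X : Type*} [TopologicalSpace X]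

variable (φ : ValuationPD X → ℝ≥0∞)

lemma phi_zero
    (hhom : ∀ (r : ℝ≥0) (μ σ : ValuationPD X),
      σ.1 = (fun f => (r : ℝ≥0∞) * μ.1 f) → φ σ = (r : ℝ≥0∞) * φ μ) :
    φ ⟨fun _ => 0, zero_mem_V⟩ = 0 := by
  have := hhom 0 ⟨fun _ => 0, zero_mem_V⟩ ⟨fun _ => 0, zero_mem_V⟩ (funext fun f => by simp)
  simpa using this

lemma phi_combo_le
    (hsub : ∀ μ ν σ : ValuationPD X, σ.1 = μ.1 + ν.1 → φ σ ≤ φ μ + φ ν)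
    (hhom : ∀ (r : ℝ≥0) (μ σ : ValuationPD X),
      σ.1 = (fun f => (r : ℝ≥0∞) * μ.1 f) → φ σ = (r : ℝ≥0∞) * φ μ)
    {ι : Type*} (t : Finset ι) (w : ι → ℝ≥0) (νs : ι → ValuationPD X) :
    ∀ h : (fun g => ∑ j ∈ t, (w j : ℝ≥0∞) * (νs j).1 g) ∈ ValuationPD X,
      φ ⟨fun g => ∑ j ∈ t, (w j : ℝ≥0∞) * (νs j).1 g, h⟩ ≤ ∑ j ∈ t, (w j : ℝ≥0∞) * φ (νs j) := by
  classical
  induction t using Finset.cons_induction with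
  | empty =>
    intro h
    have : (⟨fun g => ∑ j ∈ (∅ : Finset ι), (w j : ℝ≥0∞) * (νs j).1 g, h⟩ : ValuationPD X)
        = ⟨fun _ => 0, zero_mem_V⟩ := Subtype.ext (funext fun g => by simp)
    rw [this, phi_zero φ hhom]
    simp
  | cons a s ha ih =>
    intro h
    have hsm : (fun g => (w a : ℝ≥0∞) * (νs a).1 g) ∈ ValuationPD X :=
      smul_mem_V _ (νs a).2
    have hcmb : (fun g => ∑ j ∈ s, (w j : ℝ≥0∞) * (νs j).1 g) ∈ ValuationPD X :=
      combo_mem_V s w (fun j => (νs j).1) (fun j _ => (νs j).2)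
    have key := hsub ⟨_, hsm⟩ ⟨_, hcmb⟩ ⟨_, h⟩
      (funext fun g => by dsimp only; rw [Finset.sum_cons]; rfl)
    have h1 := hhom (w a) (νs a) ⟨_, hsm⟩ rfl
    rw [Finset.sum_cons]
    calc φ ⟨_, h⟩ ≤ φ ⟨_, hsm⟩ + φ ⟨_, hcmb⟩ := key
    _ ≤ (w a : ℝ≥0∞) * φ (νs a) + ∑ j ∈ s, (w j : ℝ≥0∞) * φ (νs j) := by
        rw [h1]; exact add_le_add le_rfl (ih hcmb)

noncomputable def comboFun {ι : Type*} (J : Finset ι) (a : ι → ℝ≥0) (G : ι → LSCFun X) :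
    LSCFun X :=
  ⟨fun x => ∑ i ∈ J, (a i : ℝ≥0∞) * (G i).1 x, by
    classical
    induction J using Finset.cons_induction with
    | empty => simpa using lowerSemicontinuous_const
    | cons b s hb ih =>
      simp only [Finset.sum_cons]
      exact ((a b • G b).2).add ih⟩

lemma comboFun_singleton {ι : Type*} (i : ι) (a : ι → ℝ≥0) (G : ι → LSCFun X) :
    comboFun ({i} : Finset ι) a G = a i • G i :=
  Subtype.ext (funext fun x => by simp [comboFun]; rfl)

lemma comboFun_cons {ι : Type*} (b : ι) (s : Finset ι) (hb : b ∉ s) (a : ι → ℝ≥0)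
    (G : ι → LSCFun X) :
    comboFun (Finset.cons b s hb) a G = a b • G b + comboFun s a G :=
  Subtype.ext (funext fun x => by simp [comboFun, Finset.sum_cons]; rfl)

lemma comboFun_mem {C₀ : Set (LSCFun X)}
    (hadd : ∀ f ∈ C₀, ∀ g ∈ C₀, f + g ∈ C₀)
    (hsmul : ∀ (r : ℝ≥0), ∀ f ∈ C₀, r • f ∈ C₀)
    {ι : Type*} (a : ι → ℝ≥0) (G : ι → LSCFun X) (J : Finset ι) (hJ : J.Nonempty)
    (hG : ∀ i ∈ J, G i ∈ C₀) : comboFun J a G ∈ C₀ := by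
  classical
  induction hJ using Finset.Nonempty.cons_induction with
  | singleton i =>
    rw [comboFun_singleton]
    exact hsmul _ _ (hG i (Finset.mem_singleton_self i))
  | cons b s hb hs ih =>
    rw [comboFun_cons]
    exact hadd _ (hsmul _ _ (hG b (Finset.mem_cons_self b s)))
      _ (ih fun i hi => hG i (Finset.mem_cons_of_mem hi))

lemma val_comboFun {μ : (LSCFun X) → ℝ≥0∞} (hμ : μ ∈ ValuationPD X)
    {ι : Type*} (a : ι → ℝ≥0) (G : ι → LSCFun X) (J : Finset ι) (hJ : J.Nonempty) :
    μ (comboFun J a G) = ∑ i ∈ J, (a i : ℝ≥0∞) * μ (G i) := by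
  classical
  induction hJ using Finset.Nonempty.cons_induction with
  | singleton i => rw [comboFun_singleton, hμ.2.1, Finset.sum_singleton]
  | cons b s hb hs ih =>
    rw [comboFun_cons, hμ.1, hμ.2.1, ih, Finset.sum_cons]

lemma iSup_min_nat (x : ℝ≥0∞) : ⨆ N : ℕ, min x ((N : ℝ≥0) : ℝ≥0∞) = x := by
  apply le_antisymm (iSup_le fun N => min_le_left _ _)
  rcases eq_or_ne x ⊤ with rfl | hx
  · have : ∀ N : ℕ, min (⊤ : ℝ≥0∞) ((N : ℝ≥0) : ℝ≥0∞) = ((N : ℝ≥0) : ℝ≥0∞) := fun N => by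
      simp
    calc (⊤ : ℝ≥0∞) = ⨆ N : ℕ, (N : ℝ≥0∞) := ENNReal.iSup_natCast.symm
    _ ≤ ⨆ N : ℕ, min (⊤ : ℝ≥0∞) ((N : ℝ≥0) : ℝ≥0∞) := by
        apply iSup_mono; intro N; rw [this N]; simp
  · obtain ⟨N, hN⟩ := exists_nat_ge x.toNNReal
    have : min x ((N : ℝ≥0) : ℝ≥0∞) = x := by
      apply min_eq_left
      rw [← ENNReal.coe_toNNReal hx]
      exact_mod_cast hN
    calc x = min x ((N : ℝ≥0) : ℝ≥0∞) := this.symm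
    _ ≤ ⨆ N : ℕ, min x ((N : ℝ≥0) : ℝ≥0∞) := le_iSup (fun N : ℕ => min x ((N : ℝ≥0) : ℝ≥0∞)) N

end SSProof
end part2

section part3
namespace SSProof
open Filter Topology

lemma sep_step {ι : Type*} [Fintype ι] [DecidableEq ι] (s : ι → ℝ≥0)
    (A : Set (ι → ℝ≥0∞)) (hne : A.Nonempty)
    (hesc : ∀ y ∈ A, ∃ i, y i ≤ (s i : ℝ≥0∞))
    (hcombo : ∀ (κ : Type) (t : Finset κ) (w : κ → ℝ), (∀ j ∈ t, 0 ≤ w j) →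
      ∑ j ∈ t, w j = 1 → ∀ ys : κ → (ι → ℝ≥0∞), (∀ j ∈ t, ys j ∈ A) →
      (fun i => ∑ j ∈ t, ENNReal.ofReal (w j) * ys j i) ∈ A)
    (κ₀ : ℝ≥0) :
    ∃ d : ι → ℝ, (∀ i, 0 ≤ d i) ∧ (∑ i, d i = 1) ∧
      ∀ y ∈ A, ∑ i, d i * (min (y i) (κ₀ : ℝ≥0∞)).toReal ≤ ∑ i, d i * (s i : ℝ) := by
  classical
  set clip : (ι → ℝ≥0∞) → (ι → ℝ) := fun y i => (min (y i) (κ₀ : ℝ≥0∞)).toReal with hclip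
  have hclip_nonneg : ∀ y i, 0 ≤ clip y i := fun y i => ENNReal.toReal_nonneg
  set B : Set (ι → ℝ) := {x | ∀ i, (s i : ℝ) < x i} with hB
  have hBopen : IsOpen B := by
    have hBi : B = ⋂ i, (fun x : ι → ℝ => x i) ⁻¹' Set.Ioi (s i : ℝ) := by
      ext x; simp [hB, Set.mem_iInter]
    rw [hBi]
    exact isOpen_iInter_of_finite fun i => isOpen_Ioi.preimage (continuous_apply i)
  have hBconv : Convex ℝ B := by
    have hBi : B = ⋂ i, {x : ι → ℝ | (s i : ℝ) < x i} := by
      ext x; simp [hB, Set.mem_iInter]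
    rw [hBi]
    exact convex_iInter fun i =>
      convex_halfSpace_gt ⟨fun a b => rfl, fun cc a => rfl⟩ _
  set H : Set (ι → ℝ) := convexHull ℝ (clip '' A) with hH
  have hHesc : ∀ x ∈ H, ∃ i, x i ≤ (s i : ℝ) := by
    intro x hx
    rw [hH, convexHull_eq] at hx
    obtain ⟨κ, t, w, z, hw0, hw1, hz, rfl⟩ := hx
    choose yy hyyA hyyz using hz
    set ys : κ → (ι → ℝ≥0∞) := fun j => if h : j ∈ t then yy j h else hne.choose with hys
    have hysA : ∀ j ∈ t, ys j ∈ A := fun j hj => by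
      rw [hys]; simp only [dif_pos hj]; exact hyyA j hj
    have hysz : ∀ j ∈ t, clip (ys j) = z j := fun j hj => by
      rw [hys]; simp only [dif_pos hj]; exact hyyz j hj
    have hYA := hcombo κ t w hw0 hw1 ys hysA
    obtain ⟨i₀, hi₀⟩ := hesc _ hYA
    refine ⟨i₀, ?_⟩
    have hcm : t.centerMass w z i₀ = ∑ j ∈ t, w j * z j i₀ := by
      rw [Finset.centerMass, hw1]
      simp [Finset.sum_apply]
    rw [hcm]
    have hmin_ne_top : ∀ (v : ℝ≥0∞), min v (κ₀ : ℝ≥0∞) ≠ ⊤ :=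
      fun v => ((min_le_right _ _).trans_lt ENNReal.coe_lt_top).ne
    have h1 : ENNReal.ofReal (∑ j ∈ t, w j * z j i₀) ≤ ((s i₀ : ℝ≥0) : ℝ≥0∞) := by
      calc ENNReal.ofReal (∑ j ∈ t, w j * z j i₀)
          = ∑ j ∈ t, ENNReal.ofReal (w j * z j i₀) :=
            ENNReal.ofReal_sum_of_nonneg fun j hj =>
              mul_nonneg (hw0 j hj) (by rw [← hysz j hj]; exact hclip_nonneg _ _)
        _ = ∑ j ∈ t, ENNReal.ofReal (w j) * min (ys j i₀) (κ₀ : ℝ≥0∞) := by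
            refine Finset.sum_congr rfl fun j hj => ?_
            rw [ENNReal.ofReal_mul (hw0 j hj), ← hysz j hj]
            congr 1
            exact ENNReal.ofReal_toReal (hmin_ne_top _)
        _ ≤ ∑ j ∈ t, ENNReal.ofReal (w j) * ys j i₀ :=
            Finset.sum_le_sum fun j hj => mul_le_mul_right (min_le_left _ _) _
        _ ≤ ((s i₀ : ℝ≥0) : ℝ≥0∞) := hi₀
    rw [← ENNReal.ofReal_coe_nnreal] at h1
    exact (ENNReal.ofReal_le_ofReal_iff (s i₀).coe_nonneg).1 h1
  have hdisj : Disjoint B H := by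
    rw [Set.disjoint_right]
    intro x hx hxB
    obtain ⟨i, hi⟩ := hHesc x hx
    exact absurd (hxB i) (not_lt.2 hi)
  obtain ⟨f, u, hfB, hfH⟩ :=
    geometric_hahn_banach_open hBconv hBopen (convex_convexHull ℝ _) hdisj
  set c : ι → ℝ := fun i => f (fun j => if i = j then 1 else 0) with hc
  have hrepr : ∀ x : ι → ℝ, f x = ∑ i, x i * c i := by
    intro x
    conv_lhs => rw [pi_eq_sum_univ x]
    rw [map_sum]
    exact Finset.sum_congr rfl fun i _ => by rw [map_smul]; simp [smul_eq_mul, hc]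
  set bse : ι → ℝ := fun j => (s j : ℝ) + 1 with hbse
  have hbseB : bse ∈ B := fun j => by simp [hbse]
  have hfbase : f bse < u := hfB _ hbseB
  have hci : ∀ i, c i ≤ 0 := by
    intro i
    by_contra hpos
    push_neg at hpos
    set R : ℝ := (u - f bse + 1) / c i with hR
    have hRpos : 0 < R := div_pos (by linarith) hpos
    have hmem : (fun j => bse j + if i = j then R else 0) ∈ B := by
      intro j
      simp only [hbse, Set.mem_setOf_eq]
      have : (0:ℝ) ≤ if i = j then R else 0 := by
        split <;> simp [hRpos.le]
      linarith
    have hval : f (fun j => bse j + if i = j then R else 0) = f bse + R * c i := by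
      rw [hrepr, hrepr]
      have : ∀ j, (bse j + if i = j then R else 0) * c j
          = bse j * c j + (if i = j then R * c j else 0) := by
        intro j; split <;> ring
      simp only [this, Finset.sum_add_distrib]
      congr 1
      rw [Finset.sum_ite_eq]
      simp
    have hlt := hfB _ hmem
    rw [hval] at hlt
    have hRc : R * c i = u - f bse + 1 := div_mul_cancel₀ _ (ne_of_gt hpos)
    linarith
  have hcorner : ∀ ε : ℝ, 0 < ε → ∑ i, ((s i : ℝ) + ε) * c i < u := by
    intro ε hε
    have hmem : (fun j => (s j : ℝ) + ε) ∈ B := fun j => by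
      simp only [Set.mem_setOf_eq]; linarith
    have := hfB _ hmem
    rwa [hrepr] at this
  have hHle : ∀ b ∈ H, u ≤ ∑ i, b i * c i := fun b hb => by
    have := hfH b hb; rwa [hrepr] at this
  obtain ⟨y₀, hy₀⟩ := hne
  have hb₀H : clip y₀ ∈ H := subset_convexHull ℝ _ ⟨y₀, hy₀, rfl⟩
  have hu0 : u ≤ 0 := by
    refine (hHle _ hb₀H).trans (Finset.sum_nonpos fun i _ => ?_)
    exact mul_nonpos_of_nonneg_of_nonpos (hclip_nonneg _ _) (hci i)
  set d : ι → ℝ := fun i => -c i with hd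
  have hd0 : ∀ i, 0 ≤ d i := fun i => by simp [hd, hci i]
  set D : ℝ := ∑ i, d i with hD
  have hD0 : 0 ≤ D := Finset.sum_nonneg fun i _ => hd0 i
  have hDpos : 0 < D := by
    rcases hD0.lt_or_eq with h | h
    · exact h
    · exfalso
      have hall : ∀ i ∈ Finset.univ, d i = 0 :=
        (Finset.sum_eq_zero_iff_of_nonneg fun i _ => hd0 i).1 h.symm
      have hcz : ∀ i, c i = 0 := fun i => by
        have := hall i (Finset.mem_univ i); simp [hd] at this; linarith
      have := hcorner 1 one_pos
      simp [hcz] at this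
      linarith
  have hkey : ∀ y ∈ A, ∑ i, d i * clip y i ≤ ∑ i, d i * (s i : ℝ) := by
    intro y hy
    have hbH : clip y ∈ H := subset_convexHull ℝ _ ⟨y, hy, rfl⟩
    have h1 : u ≤ ∑ i, clip y i * c i := hHle _ hbH
    -- equivalent real inequality via c = -d
    have hgoal' : ∑ i, (s i : ℝ) * c i ≤ ∑ i, clip y i * c i := by
      by_contra hcon
      push_neg at hcon
      set δ : ℝ := ∑ i, (s i : ℝ) * c i - ∑ i, clip y i * c i with hδdef
      have hδ : 0 < δ := by simp [hδdef]; linarith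
      set Sc : ℝ := ∑ i, c i with hSc
      have hScle : Sc ≤ 0 := Finset.sum_nonpos fun i _ => hci i
      have hM : (0:ℝ) < 1 - Sc := by linarith
      set ε : ℝ := δ / (1 - Sc) with hε
      have hεpos : 0 < ε := div_pos hδ hM
      have hεprod : ε * (1 - Sc) = δ := div_mul_cancel₀ _ (ne_of_gt hM)
      have hεprod' : ε - ε * Sc = δ := by rw [← hεprod]; ring
      have hcor := hcorner ε hεpos
      have hexp : ∑ i, ((s i : ℝ) + ε) * c i = ∑ i, (s i : ℝ) * c i + ε * Sc := by
        simp only [add_mul, Finset.sum_add_distrib, hSc, Finset.mul_sum]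
      rw [hexp] at hcor
      linarith
    have hrw : ∀ (g : ι → ℝ), ∑ i, d i * g i = -∑ i, g i * c i := by
      intro g
      rw [← Finset.sum_neg_distrib]
      exact Finset.sum_congr rfl fun i _ => by simp [hd]; ring
    rw [hrw, hrw]
    linarith
  refine ⟨fun i => d i / D, fun i => div_nonneg (hd0 i) hDpos.le, ?_, ?_⟩
  · rw [← Finset.sum_div]; exact div_self (ne_of_gt hDpos)
  · intro y hy
    have hk := hkey y hy
    have hrw : ∀ (g : ι → ℝ), ∑ i, d i / D * g i = (∑ i, d i * g i) / D := by
      intro g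
      rw [Finset.sum_div]
      exact Finset.sum_congr rfl fun i _ => by ring
    rw [hrw, hrw]
    exact div_le_div_of_nonneg_right hk hDpos.le
end SSProof
end part3

section part4
namespace SSProof
open Filter Topology

lemma sep {ι : Type*} [Fintype ι] [DecidableEq ι] (s : ι → ℝ≥0)
    (A : Set (ι → ℝ≥0∞)) (hne : A.Nonempty)
    (hesc : ∀ y ∈ A, ∃ i, y i ≤ (s i : ℝ≥0∞))
    (hcombo : ∀ (κ : Type) (t : Finset κ) (w : κ → ℝ), (∀ j ∈ t, 0 ≤ w j) →
      ∑ j ∈ t, w j = 1 → ∀ ys : κ → (ι → ℝ≥0∞), (∀ j ∈ t, ys j ∈ A) →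
      (fun i => ∑ j ∈ t, ENNReal.ofReal (w j) * ys j i) ∈ A) :
    ∃ t : ι → ℝ≥0, (∃ i, 0 < t i) ∧
      ∀ y ∈ A, ∑ i, (t i : ℝ≥0∞) * y i ≤ ∑ i, (t i : ℝ≥0∞) * (s i : ℝ≥0∞) := by
  classical
  choose d hd0 hd1 hdle using fun m : ℕ => sep_step s A hne hesc hcombo (m : ℝ≥0)
  have hmem : ∀ m, d m ∈ stdSimplex ℝ ι := fun m => ⟨hd0 m, hd1 m⟩
  obtain ⟨t, htΔ, ψ, hψ, htend⟩ := (isCompact_stdSimplex ℝ ι).tendsto_subseq hmem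
  have hcoord : ∀ i, Tendsto (fun m => d (ψ m) i) atTop (𝓝 (t i)) :=
    fun i => ((continuous_apply i).tendsto t).comp htend
  have hNb : ∀ y ∈ A, ∀ N : ℕ,
      ∑ i, t i * (min (y i) ((N : ℝ≥0) : ℝ≥0∞)).toReal ≤ ∑ i, t i * (s i : ℝ) := by
    intro y hy N
    have hev : ∀ᶠ m in atTop,
        ∑ i, d (ψ m) i * (min (y i) ((N : ℝ≥0) : ℝ≥0∞)).toReal
          ≤ ∑ i, d (ψ m) i * (s i : ℝ) := by
      filter_upwards [eventually_ge_atTop N] with m hm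
      have h1 : ∑ i, d (ψ m) i * (min (y i) ((N : ℝ≥0) : ℝ≥0∞)).toReal
          ≤ ∑ i, d (ψ m) i * (min (y i) ((ψ m : ℝ≥0) : ℝ≥0∞)).toReal := by
        refine Finset.sum_le_sum fun i _ => mul_le_mul_of_nonneg_left ?_ (hd0 (ψ m) i)
        apply ENNReal.toReal_mono
        · exact ((min_le_right _ _).trans_lt ENNReal.coe_lt_top).ne
        · refine min_le_min le_rfl ?_
          have hNm : (N : ℝ≥0) ≤ ((ψ m : ℕ) : ℝ≥0) := by
            exact_mod_cast hm.trans hψ.le_apply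
          exact_mod_cast hNm
      exact h1.trans (hdle (ψ m) y hy)
    refine le_of_tendsto_of_tendsto
      (tendsto_finset_sum _ fun i _ => (hcoord i).mul_const _)
      (tendsto_finset_sum _ fun i _ => (hcoord i).mul_const _) hev
  refine ⟨fun i => (t i).toNNReal, ?_, ?_⟩
  · by_contra hz
    push_neg at hz
    have hzero : ∀ i, t i = 0 := fun i => by
      have h1 := hz i
      have h2 : (t i).toNNReal = 0 := le_antisymm h1 zero_le
      have h3 := Real.toNNReal_eq_zero.1 h2
      exact le_antisymm h3 (htΔ.1 i)
    have hsum := htΔ.2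
    rw [Finset.sum_eq_zero fun i _ => hzero i] at hsum
    exact zero_ne_one hsum
  · intro y hy
    have hstep : ∀ N : ℕ, ∑ i, ((t i).toNNReal : ℝ≥0∞) * min (y i) ((N : ℝ≥0) : ℝ≥0∞)
        ≤ ∑ i, ((t i).toNNReal : ℝ≥0∞) * ((s i : ℝ≥0) : ℝ≥0∞) := by
      intro N
      have hb := hNb y hy N
      have hmin_ne_top : ∀ (v : ℝ≥0∞), min v ((N : ℝ≥0) : ℝ≥0∞) ≠ ⊤ :=
        fun v => ((min_le_right _ _).trans_lt ENNReal.coe_lt_top).ne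
      have hL : ∑ i, ((t i).toNNReal : ℝ≥0∞) * min (y i) ((N : ℝ≥0) : ℝ≥0∞)
          = ENNReal.ofReal (∑ i, t i * (min (y i) ((N : ℝ≥0) : ℝ≥0∞)).toReal) := by
        rw [ENNReal.ofReal_sum_of_nonneg fun i _ =>
          mul_nonneg (htΔ.1 i) ENNReal.toReal_nonneg]
        refine Finset.sum_congr rfl fun i _ => ?_
        rw [ENNReal.ofReal_mul (htΔ.1 i), ENNReal.ofReal_toReal (hmin_ne_top _)]
        rfl
      have hR : ∑ i, ((t i).toNNReal : ℝ≥0∞) * ((s i : ℝ≥0) : ℝ≥0∞)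
          = ENNReal.ofReal (∑ i, t i * (s i : ℝ)) := by
        rw [ENNReal.ofReal_sum_of_nonneg fun i _ =>
          mul_nonneg (htΔ.1 i) (s i).coe_nonneg]
        refine Finset.sum_congr rfl fun i _ => ?_
        rw [ENNReal.ofReal_mul (htΔ.1 i), ENNReal.ofReal_coe_nnreal]
        rfl
      rw [hL, hR]
      exact ENNReal.ofReal_le_ofReal hb
    have hmono : ∀ i : ι, Monotone fun N : ℕ =>
        ((t i).toNNReal : ℝ≥0∞) * min (y i) ((N : ℝ≥0) : ℝ≥0∞) := by
      intro i N M hNM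
      refine mul_le_mul_right (min_le_min le_rfl ?_) _
      exact_mod_cast (by exact_mod_cast hNM : ((N : ℝ≥0)) ≤ (M : ℝ≥0))
    calc ∑ i, ((t i).toNNReal : ℝ≥0∞) * y i
        = ∑ i, ⨆ N : ℕ, ((t i).toNNReal : ℝ≥0∞) * min (y i) ((N : ℝ≥0) : ℝ≥0∞) := by
          refine Finset.sum_congr rfl fun i _ => ?_
          rw [← ENNReal.mul_iSup, iSup_min_nat]
      _ = ⨆ N : ℕ, ∑ i, ((t i).toNNReal : ℝ≥0∞) * min (y i) ((N : ℝ≥0) : ℝ≥0∞) :=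
          ENNReal.finsetSum_iSup_of_monotone hmono
      _ ≤ _ := iSup_le hstep

end SSProof
end part4

/-- For a d-dense subcone `C₀ ⊆ 𝓛X`, every sublinear functional on `𝓥X` that
is lower semicontinuous for the weak upper topology `w(𝓥X, C₀)` is the
pointwise supremum of the evaluations at elements of `C₀` lying below it. -/
theorem sublinear_lsc_eq_sup_evaluations_d_dense {X : Type*} [TopologicalSpace X]
    (C₀ : Set (LSCFun X))
    (hC₀_add : ∀ f ∈ C₀, ∀ g ∈ C₀, f + g ∈ C₀)
    (hC₀_smul : ∀ (r : ℝ≥0), ∀ f ∈ C₀, r • f ∈ C₀)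
    (hC₀_dense : ∀ S : Set (LSCFun X), C₀ ⊆ S →
      (∀ f ∈ S, ∀ g ∈ S, f + g ∈ S) →
      (∀ (r : ℝ≥0), ∀ f ∈ S, r • f ∈ S) →
      (∀ T ⊆ S, T.Nonempty → DirectedOn (· ≤ ·) T → LSCFun.supOf T ∈ S) →
      S = Set.univ)
    (φ : ValuationPD X → ℝ≥0∞)
    (hφ_subadd : ∀ μ ν σ : ValuationPD X, σ.1 = μ.1 + ν.1 → φ σ ≤ φ μ + φ ν)
    (hφ_hom : ∀ (r : ℝ≥0) (μ σ : ValuationPD X),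
      σ.1 = (fun f => (r : ℝ≥0∞) * μ.1 f) → φ σ = (r : ℝ≥0∞) * φ μ)
    (hφ_lsc : ∀ r : ℝ≥0,
      IsOpen[TopologicalSpace.generateFrom
          {S | ∃ f ∈ C₀, ∃ s : ℝ≥0, S = {μ : ValuationPD X | (s : ℝ≥0∞) < μ.1 f}}]
        {μ : ValuationPD X | (r : ℝ≥0∞) < φ μ}) :
    ∀ μ : ValuationPD X,
      φ μ = ⨆ (f : C₀) (_ : ∀ ν : ValuationPD X, ν.1 f.1 ≤ φ ν), μ.1 f.1 := by
    classical
  intro μ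
  have heasy : (⨆ (f : C₀) (_ : ∀ ν : ValuationPD X, ν.1 f.1 ≤ φ ν), μ.1 f.1) ≤ φ μ :=
    iSup_le fun f => iSup_le fun hf => hf μ
  refine le_antisymm ?_ heasy
  by_contra hlt'
  push_neg at hlt'
  obtain ⟨r, hr1, hr2⟩ := ENNReal.lt_iff_exists_nnreal_btwn.1 hlt'
  have hr0 : r ≠ 0 := by
    rintro rfl
    exact absurd hr1 (by simp)
  -- extract a basic open set from the subbasis
  set SB : Set (Set (ValuationPD X)) :=
    {S | ∃ f ∈ C₀, ∃ s : ℝ≥0, S = {μ : ValuationPD X | (s : ℝ≥0∞) < μ.1 f}} with hSB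
  set T : TopologicalSpace (ValuationPD X) := TopologicalSpace.generateFrom SB with hT
  have hbasis := @TopologicalSpace.isTopologicalBasis_of_subbasis (ValuationPD X) T SB hT
  have hopen : IsOpen[T] {ν : ValuationPD X | (r : ℝ≥0∞) < φ ν} := hφ_lsc r
  have hμmem : μ ∈ {ν : ValuationPD X | (r : ℝ≥0∞) < φ ν} := hr2
  obtain ⟨v, hv, hμv, hvsub⟩ :=
    @TopologicalSpace.IsTopologicalBasis.exists_subset_of_mem_open _ T _ hbasis _ _ hμmem hopen
  obtain ⟨F, ⟨hFfin, hFsub⟩, rfl⟩ := hv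
  haveI : Fintype F := hFfin.fintype
  have hch : ∀ S : F, ∃ p : LSCFun X × ℝ≥0, p.1 ∈ C₀ ∧
      (S : Set (ValuationPD X)) = {ν : ValuationPD X | (p.2 : ℝ≥0∞) < ν.1 p.1} := by
    intro S
    obtain ⟨f, hf, s, hS⟩ := hFsub S.2
    exact ⟨(f, s), hf, hS⟩
  choose p hpC hpS using hch
  set G : F → LSCFun X := fun S => (p S).1 with hG
  set sv : F → ℝ≥0 := fun S => (p S).2 with hsv
  have hμi : ∀ i : F, (sv i : ℝ≥0∞) < μ.1 (G i) := by
    intro i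
    have hmem : μ ∈ (i : Set (ValuationPD X)) := (Set.mem_sInter.1 hμv) i.1 i.2
    rw [hpS i] at hmem
    exact hmem
  have hbox : ∀ ν : ValuationPD X,
      (∀ i : F, (sv i : ℝ≥0∞) < ν.1 (G i)) → (r : ℝ≥0∞) < φ ν := by
    intro ν hν
    refine hvsub (Set.mem_sInter.2 fun S hS => ?_)
    rw [show S = {ν : ValuationPD X | ((p ⟨S, hS⟩).2 : ℝ≥0∞) < ν.1 (p ⟨S, hS⟩).1} from
      hpS ⟨S, hS⟩]
    exact hν ⟨S, hS⟩
  -- the image of the sublevel set of φ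
  set A : Set (F → ℝ≥0∞) :=
    (fun (ν : ValuationPD X) (i : F) => ν.1 (G i)) '' {ν | φ ν ≤ (r : ℝ≥0∞)} with hA
  have hzmem : (⟨fun _ => 0, SSProof.zero_mem_V⟩ : ValuationPD X)
      ∈ {ν : ValuationPD X | φ ν ≤ (r : ℝ≥0∞)} := by
    have hz := SSProof.phi_zero φ hφ_hom
    simp only [Set.mem_setOf_eq, hz]
    exact zero_le
  have hne : A.Nonempty := ⟨_, ⟨_, hzmem, rfl⟩⟩
  have hesc : ∀ y ∈ A, ∃ i, y i ≤ (sv i : ℝ≥0∞) := by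
    rintro y ⟨ν, hν, rfl⟩
    by_contra hcc
    push_neg at hcc
    exact absurd (hbox ν fun i => hcc i) (not_lt.2 hν)
  have hcombo : ∀ (κ : Type) (t : Finset κ) (w : κ → ℝ), (∀ j ∈ t, 0 ≤ w j) →
      ∑ j ∈ t, w j = 1 → ∀ ys : κ → (F → ℝ≥0∞), (∀ j ∈ t, ys j ∈ A) →
      (fun i => ∑ j ∈ t, ENNReal.ofReal (w j) * ys j i) ∈ A := by
    intro κ t w hw0 hw1 ys hys
    have hchν : ∀ j : t, ∃ ν : ValuationPD X, φ ν ≤ (r : ℝ≥0∞) ∧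
        (fun i : F => ν.1 (G i)) = ys j.1 := fun j => hys j.1 j.2
    choose νs hνs hνsy using hchν
    set wt : t → ℝ≥0 := fun j => (w j.1).toNNReal with hwt
    set σf : (LSCFun X) → ℝ≥0∞ :=
      fun g => ∑ j ∈ t.attach, (wt j : ℝ≥0∞) * (νs j).1 g with hσf
    have hσmem : σf ∈ ValuationPD X :=
      SSProof.combo_mem_V _ _ _ (fun j _ => (νs j).2)
    have hwsum : ∑ j ∈ t.attach, (wt j : ℝ≥0∞) = 1 := by
      have h1 : ∑ j ∈ t.attach, (wt j : ℝ≥0∞)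
          = ENNReal.ofReal (∑ j ∈ t.attach, w j.1) := by
        rw [ENNReal.ofReal_sum_of_nonneg (fun j _ => hw0 j.1 j.2)]
        rfl
      rw [h1, Finset.sum_attach t w, hw1, ENNReal.ofReal_one]
    have hφσ : φ ⟨σf, hσmem⟩ ≤ (r : ℝ≥0∞) := by
      refine (SSProof.phi_combo_le φ hφ_subadd hφ_hom t.attach wt νs hσmem).trans ?_
      calc ∑ j ∈ t.attach, (wt j : ℝ≥0∞) * φ (νs j)
          ≤ ∑ j ∈ t.attach, (wt j : ℝ≥0∞) * (r : ℝ≥0∞) :=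
            Finset.sum_le_sum fun j _ => mul_le_mul_right (hνs j) _
        _ = (∑ j ∈ t.attach, (wt j : ℝ≥0∞)) * (r : ℝ≥0∞) := by rw [Finset.sum_mul]
        _ = (r : ℝ≥0∞) := by rw [hwsum, one_mul]
    refine ⟨⟨σf, hσmem⟩, hφσ, ?_⟩
    funext i
    show σf (G i) = ∑ j ∈ t, ENNReal.ofReal (w j) * ys j i
    rw [hσf]
    dsimp only
    rw [← Finset.sum_attach t (fun j => ENNReal.ofReal (w j) * ys j i)]
    refine Finset.sum_congr rfl fun j _ => ?_
    rw [← hνsy j]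
    rfl
  obtain ⟨tc, ⟨i₀, hi₀⟩, hbound⟩ := SSProof.sep sv A hne hesc hcombo
  set Tf : ValuationPD X → ℝ≥0∞ := fun ν => ∑ i : F, (tc i : ℝ≥0∞) * ν.1 (G i) with hTf
  set c : ℝ≥0 := ∑ i : F, tc i * sv i with hcdef
  have hcE : (c : ℝ≥0∞) = ∑ i : F, (tc i : ℝ≥0∞) * (sv i : ℝ≥0∞) := by
    rw [hcdef]; push_cast; rfl
  have hK : ∀ ν : ValuationPD X, φ ν ≤ (r : ℝ≥0∞) → Tf ν ≤ (c : ℝ≥0∞) := by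
    intro ν hν
    have := hbound _ ⟨ν, hν, rfl⟩
    rw [hcE]
    exact this
  -- scaled valuations
  have hφscl : ∀ (l : ℝ≥0) (ν : ValuationPD X),
      φ ⟨fun g => (l : ℝ≥0∞) * ν.1 g, SSProof.smul_mem_V l ν.2⟩ = (l : ℝ≥0∞) * φ ν :=
    fun l ν => hφ_hom l ν _ rfl
  have hTscl : ∀ (l : ℝ≥0) (ν : ValuationPD X),
      Tf ⟨fun g => (l : ℝ≥0∞) * ν.1 g, SSProof.smul_mem_V l ν.2⟩ = (l : ℝ≥0∞) * Tf ν := by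
    intro l ν
    rw [hTf]
    dsimp only
    rw [Finset.mul_sum]
    exact Finset.sum_congr rfl fun i _ => by ring
  have hTμ_ge : (c : ℝ≥0∞) ≤ Tf μ := by
    rw [hcE, hTf]
    exact Finset.sum_le_sum fun i _ => mul_le_mul_right (hμi i).le _
  have hTμ_pos : 0 < Tf μ := by
    have h1 : (0 : ℝ≥0∞) < (tc i₀ : ℝ≥0∞) * μ.1 (G i₀) :=
      ENNReal.mul_pos (by exact_mod_cast hi₀.ne')
        (lt_of_le_of_lt zero_le (hμi i₀)).ne'
    exact h1.trans_le (Finset.single_le_sum (f := fun i : F => (tc i : ℝ≥0∞) * μ.1 (G i))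
      (fun i _ => zero_le) (Finset.mem_univ i₀))
  have hscale : ∀ ν : ValuationPD X, φ ν ≠ ⊤ →
      (r : ℝ≥0∞) * Tf ν ≤ (c : ℝ≥0∞) * φ ν := by
    intro ν hνtop
    rcases eq_or_ne (φ ν) 0 with h0 | hpos
    · have hTz : Tf ν = 0 := by
        by_contra hTz
        have hb : ∀ l : ℝ≥0, (l : ℝ≥0∞) * Tf ν ≤ (c : ℝ≥0∞) := fun l => by
          have := hK ⟨fun g => (l : ℝ≥0∞) * ν.1 g, SSProof.smul_mem_V l ν.2⟩
            (by rw [hφscl, h0, mul_zero]; exact zero_le)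
          rwa [hTscl] at this
        rcases eq_or_ne (Tf ν) ⊤ with htop | hfin
        · have h1 := hb 1
          rw [htop] at h1
          simp at h1
        · set q : ℝ≥0 := (Tf ν).toNNReal with hq
          have hq0 : q ≠ 0 := by
            rw [hq]
            simp [ENNReal.toNNReal_eq_zero_iff, hTz, hfin]
          have h2 := hb ((c + 1) / q)
          rw [← ENNReal.coe_toNNReal hfin, ← hq, ← ENNReal.coe_mul,
            div_mul_cancel₀ _ hq0] at h2
          have := ENNReal.coe_le_coe.1 h2
          simp at this
      rw [hTz, mul_zero]
      exact zero_le
    · set x : ℝ≥0 := (φ ν).toNNReal with hx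
      have hxν : (x : ℝ≥0∞) = φ ν := ENNReal.coe_toNNReal hνtop
      have hx0 : x ≠ 0 := by
        rw [hx]
        simp [ENNReal.toNNReal_eq_zero_iff, hpos, hνtop]
      set l : ℝ≥0 := r / x with hl
      have hlφ : (l : ℝ≥0∞) * φ ν = (r : ℝ≥0∞) := by
        rw [← hxν, ← ENNReal.coe_mul, hl, div_mul_cancel₀ _ hx0]
      have hKl := hK ⟨fun g => (l : ℝ≥0∞) * ν.1 g, SSProof.smul_mem_V l ν.2⟩
        (by rw [hφscl, hlφ])
      rw [hTscl] at hKl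
      calc (r : ℝ≥0∞) * Tf ν = ((l : ℝ≥0∞) * φ ν) * Tf ν := by rw [hlφ]
        _ = ((l : ℝ≥0∞) * Tf ν) * φ ν := by ring
        _ ≤ (c : ℝ≥0∞) * φ ν := mul_le_mul_left hKl _
  -- construct the final function from coefficients b * tc
  have huniv : (Finset.univ : Finset F).Nonempty := ⟨i₀, Finset.mem_univ i₀⟩
  have hval : ∀ (b : ℝ≥0) (ν : ValuationPD X),
      ν.1 (SSProof.comboFun Finset.univ (fun i => b * tc i) G) = (b : ℝ≥0∞) * Tf ν := by
    intro b ν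
    rw [SSProof.val_comboFun ν.2 _ _ _ huniv, hTf]
    dsimp only
    rw [Finset.mul_sum]
    refine Finset.sum_congr rfl fun i _ => ?_
    push_cast
    ring
  have hmemC : ∀ b : ℝ≥0,
      SSProof.comboFun (X := X) Finset.univ (fun i => b * tc i) G ∈ C₀ :=
    fun b => SSProof.comboFun_mem hC₀_add hC₀_smul _ _ _ huniv (fun i _ => hpC i)
  -- choose the scalar b
  have hfinal : ∃ b : ℝ≥0, (∀ ν : ValuationPD X, (b : ℝ≥0∞) * Tf ν ≤ φ ν) ∧
      (r : ℝ≥0∞) ≤ (b : ℝ≥0∞) * Tf μ := by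
    rcases eq_or_ne c 0 with hc0 | hc0
    · have hTz : ∀ ν : ValuationPD X, φ ν ≠ ⊤ → Tf ν = 0 := by
        intro ν hν
        have := hscale ν hν
        rw [hc0] at this
        simp only [ENNReal.coe_zero, zero_mul, le_zero_iff] at this
        rcases mul_eq_zero.1 this with h | h
        · exact absurd h (by exact_mod_cast hr0)
        · exact h
      rcases eq_or_ne (Tf μ) ⊤ with hqt | hqt
      · refine ⟨1, fun ν => ?_, ?_⟩
        · rcases eq_or_ne (φ ν) ⊤ with h | h
          · rw [h]; exact le_top
          · rw [hTz ν h, mul_zero]; exact zero_le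
        · rw [hqt]
          simp
      · set q : ℝ≥0 := (Tf μ).toNNReal with hq
        have hq0 : q ≠ 0 := by
          rw [hq]
          simp [ENNReal.toNNReal_eq_zero_iff, hTμ_pos.ne', hqt]
        refine ⟨r / q, fun ν => ?_, ?_⟩
        · rcases eq_or_ne (φ ν) ⊤ with h | h
          · rw [h]; exact le_top
          · rw [hTz ν h, mul_zero]; exact zero_le
        · rw [← ENNReal.coe_toNNReal hqt, ← hq, ← ENNReal.coe_mul,
            div_mul_cancel₀ _ hq0]
    · refine ⟨r / c, fun ν => ?_, ?_⟩
      · rcases eq_or_ne (φ ν) ⊤ with h | h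
        · rw [h]; exact le_top
        · have hs := hscale ν h
          have hcoe : ((r / c : ℝ≥0) : ℝ≥0∞) = (r : ℝ≥0∞) * ((c : ℝ≥0∞))⁻¹ := by
            rw [ENNReal.coe_div hc0, div_eq_mul_inv]
          calc ((r / c : ℝ≥0) : ℝ≥0∞) * Tf ν
              = ((r : ℝ≥0∞) * Tf ν) * ((c : ℝ≥0∞))⁻¹ := by rw [hcoe]; ring
            _ ≤ ((c : ℝ≥0∞) * φ ν) * ((c : ℝ≥0∞))⁻¹ := mul_le_mul_left hs _
            _ = φ ν * ((c : ℝ≥0∞) * ((c : ℝ≥0∞))⁻¹) := by ring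
            _ = φ ν := by
                rw [ENNReal.mul_inv_cancel (by exact_mod_cast hc0) ENNReal.coe_ne_top,
                  mul_one]
      · have h1 : ((r / c : ℝ≥0) : ℝ≥0∞) * (c : ℝ≥0∞) = (r : ℝ≥0∞) := by
          rw [← ENNReal.coe_mul, div_mul_cancel₀ _ hc0]
        calc (r : ℝ≥0∞) = ((r / c : ℝ≥0) : ℝ≥0∞) * (c : ℝ≥0∞) := h1.symm
          _ ≤ ((r / c : ℝ≥0) : ℝ≥0∞) * Tf μ := mul_le_mul_right hTμ_ge _
  obtain ⟨b, hadm, hrle⟩ := hfinal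
  have hadm' : ∀ ν : ValuationPD X,
      ν.1 (SSProof.comboFun Finset.univ (fun i => b * tc i) G) ≤ φ ν := fun ν => by
    rw [hval b ν]; exact hadm ν
  have hle : (r : ℝ≥0∞) ≤ ⨆ (f : C₀) (_ : ∀ ν : ValuationPD X, ν.1 f.1 ≤ φ ν), μ.1 f.1 := by
    refine le_trans ?_ (le_iSup₂_of_le
      (⟨SSProof.comboFun Finset.univ (fun i => b * tc i) G, hmemC b⟩ : C₀) hadm' le_rfl)
    rw [hval b μ]
    exact hrle
  exact absurd (hle.trans_lt hr1) (lt_irrefl _)
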